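/- Let f : ℝ² → ℝ be C¹, and let w, u : [t₀, T) → ℝ be differentiable functions such that w'(t) < f(t, w(t)) for all t in [t₀, T), u'(t) = f(t, u(t)) for all t in [t₀, T), and w(t₀) ≤ u(t₀). Then w(t) < u(t) for all t in (t₀, T). -/

import Mathlib

open Filter Topology Set

lemma slope_pos_eventually {g : ℝ → ℝ} {a : ℝ} (hd : DifferentiableAt ℝ g a)
    (h0 : g a = 0) (h' : 0 < deriv g a) :
    ∀ᶠ x in 𝓝[≠] a, 0 < g x / (x - a) := by
  have ht : Tendsto (slope g a) (𝓝[≠] a) (𝓝 (deriv g a)) :=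
    hasDerivAt_iff_tendsto_slope.mp hd.hasDerivAt
  filter_upwards [ht.eventually_const_lt h'] with x hx
  simpa [slope_def_field, h0] using hx

/-- Classical subsolution comparison lemma: a strict subsolution starting below a
solution of `u' = f(t,u)` stays strictly below it on `(t₀, T)`. -/
theorem subsolution_comparison (f : ℝ × ℝ → ℝ) (hf : ContDiff ℝ 1 f)
    (t₀ T : ℝ) (w u : ℝ → ℝ)
    (hw : ∀ t ∈ Set.Ico t₀ T, DifferentiableAt ℝ w t)
    (hw' : ∀ t ∈ Set.Ico t₀ T, deriv w t < f (t, w t))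
    (hu : ∀ t ∈ Set.Ico t₀ T, DifferentiableAt ℝ u t)
    (hu' : ∀ t ∈ Set.Ico t₀ T, deriv u t = f (t, u t))
    (h0 : w t₀ ≤ u t₀) :
    ∀ t ∈ Set.Ioo t₀ T, w t < u t := by
  rintro t ⟨ht₀, htT⟩
  by_contra hcon
  push_neg at hcon
  set g : ℝ → ℝ := fun s => u s - w s with hgdef
  have hgdiff : ∀ s ∈ Set.Ico t₀ T, DifferentiableAt ℝ g s :=
    fun s hs => (hu s hs).sub (hw s hs)
  have hgderiv : ∀ s ∈ Set.Ico t₀ T, w s = u s → 0 < deriv g s := by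
    intro s hs heq
    have h1 : deriv g s = deriv u s - deriv w s := deriv_sub (hu s hs) (hw s hs)
    rw [h1, hu' s hs, ← heq]
    linarith [hw' s hs]
  -- Step 1: find t' ∈ [t₀, t) with g t' > 0
  obtain ⟨t', ht'0, ht't, hgt'⟩ : ∃ t', t₀ ≤ t' ∧ t' < t ∧ 0 < g t' := by
    rcases lt_or_eq_of_le h0 with hlt | heq
    · exact ⟨t₀, le_refl _, ht₀, by simp only [hgdef]; linarith⟩
    · have hmem : t₀ ∈ Set.Ico t₀ T := ⟨le_refl _, lt_trans ht₀ htT⟩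
      have h0' : g t₀ = 0 := by simp [hgdef, heq]
      have hev := slope_pos_eventually (hgdiff t₀ hmem) h0' (hgderiv t₀ hmem heq)
      have hev' : ∀ᶠ x in 𝓝[>] t₀, 0 < g x / (x - t₀) :=
        hev.filter_mono (nhdsWithin_mono _ (fun x hx => ne_of_gt hx))
      have hev2 : ∀ᶠ x in 𝓝[>] t₀, x < t :=
        eventually_nhdsWithin_of_eventually_nhds (eventually_lt_nhds ht₀)
      have hev3 : ∀ᶠ x in (𝓝[>] t₀), x ∈ Set.Ioi t₀ := eventually_mem_nhdsWithin
      obtain ⟨x, hx1, hx2, hx3⟩ := (hev'.and (hev2.and hev3)).exists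
      refine ⟨x, le_of_lt hx3, hx2, ?_⟩
      have : (0:ℝ) < x - t₀ := by simpa using sub_pos.mpr (Set.mem_Ioi.mp hx3)
      have := (div_pos_iff).mp hx1
      rcases this with ⟨h, _⟩ | ⟨_, h⟩
      · exact h
      · linarith
  -- Step 2: first crossing after t'
  set S : Set ℝ := {s ∈ Set.Icc t' t | g s ≤ 0} with hSdef
  have htS : t ∈ S := ⟨⟨le_of_lt ht't, le_refl _⟩, by simp only [hgdef]; linarith⟩
  have hSne : S.Nonempty := ⟨t, htS⟩
  have hSbdd : BddBelow S := ⟨t', fun s hs => hs.1.1⟩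
  set s₀ := sInf S with hs₀def
  have hs₀ge : t' ≤ s₀ := le_csInf hSne (fun s hs => hs.1.1)
  have hs₀le : s₀ ≤ t := csInf_le hSbdd htS
  have hs₀mem : s₀ ∈ Set.Ico t₀ T := ⟨le_trans ht'0 hs₀ge, lt_of_le_of_lt hs₀le htT⟩
  have hs₀cl : s₀ ∈ closure S := csInf_mem_closure hSne hSbdd
  have hgcont : ContinuousAt g s₀ := (hgdiff s₀ hs₀mem).continuousAt
  -- g s₀ ≤ 0
  have hgs₀le : g s₀ ≤ 0 := by
    have h1 : g s₀ ∈ closure (g '' S) := hgcont.continuousWithinAt.mem_closure_image hs₀cl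
    have h2 : closure (g '' S) ⊆ Set.Iic 0 := by
      rw [← closure_Iic (0:ℝ)]
      refine closure_mono ?_
      rintro y ⟨x, hx, rfl⟩
      exact hx.2
    exact h2 h1
  have ht's₀ : t' < s₀ := lt_of_le_of_ne hs₀ge (fun h => by rw [← h] at hgs₀le; linarith)
  -- g > 0 on [t', s₀)
  have hgpos : ∀ x, t' ≤ x → x < s₀ → 0 < g x := by
    intro x hx1 hx2
    by_contra hc
    push_neg at hc
    have : x ∈ S := ⟨⟨hx1, le_of_lt (lt_of_lt_of_le hx2 hs₀le)⟩, hc⟩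
    exact absurd (csInf_le hSbdd this) (not_le.mpr hx2)
  -- g s₀ ≥ 0 by left continuity, hence g s₀ = 0
  have hgs₀ge : 0 ≤ g s₀ := by
    have hclIoo : s₀ ∈ closure (Set.Ioo t' s₀) := by
      rw [closure_Ioo (ne_of_lt ht's₀)]; exact ⟨le_of_lt ht's₀, le_refl _⟩
    have h1 : g s₀ ∈ closure (g '' Set.Ioo t' s₀) := hgcont.continuousWithinAt.mem_closure_image hclIoo
    have h2 : closure (g '' Set.Ioo t' s₀) ⊆ Set.Ici 0 := by
      rw [← closure_Ici (0:ℝ)]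
      refine closure_mono ?_
      rintro y ⟨x, hx, rfl⟩
      exact le_of_lt (hgpos x (le_of_lt hx.1) hx.2)
    exact h2 h1
  have hgs₀ : g s₀ = 0 := le_antisymm hgs₀le hgs₀ge
  have heq' : w s₀ = u s₀ := by
    have := hgs₀; simp only [hgdef] at this; linarith
  -- derivative positive at s₀, slope argument to the left gives contradiction
  have hev := slope_pos_eventually (hgdiff s₀ hs₀mem) hgs₀ (hgderiv s₀ hs₀mem heq')
  have hev' : ∀ᶠ x in 𝓝[<] s₀, 0 < g x / (x - s₀) :=
    hev.filter_mono (nhdsWithin_mono _ (fun x hx => ne_of_lt hx))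
  have hev2 : ∀ᶠ x in 𝓝[<] s₀, t' < x :=
    eventually_nhdsWithin_of_eventually_nhds (eventually_gt_nhds ht's₀)
  have hev3 : ∀ᶠ x in (𝓝[<] s₀), x ∈ Set.Iio s₀ := eventually_mem_nhdsWithin
  obtain ⟨x, hx1, hx2, hx3⟩ := (hev'.and (hev2.and hev3)).exists
  have hxneg : x - s₀ < 0 := sub_neg.mpr hx3
  have hgxpos : 0 < g x := hgpos x (le_of_lt hx2) hx3
  have : g x / (x - s₀) < 0 := div_neg_of_pos_of_neg hgxpos hxneg
  linarith
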